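/- Let G be a mean-payoff parity game with n vertices whose vertex priorities are bounded by an even number d. For every progress labelling (µ, φ) of G (over any linearly ordered set M) there exists a succinct progress labelling (µ', φ) that is isomorphic to it; that is, µ' takes values in S_{n,d}, for every vertex v the sequences µ(v) and µ'(v) have the same index ℓ, and for all vertices v, w and every priority p: µ'(v)|_p < µ'(w)|_p if and only if µ(v)|_p < µ(w)|_p, and µ'(v)|_p = µ'(w)|_p if and only if µ(v)|_p = µ(w)|_p. In particular, if (µ, φ) is a progress measure then so is (µ', φ). -/

import Mathlib

/-- A mean-payoff parity game on a vertex type `V`: a directed graph in which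
every vertex has at least one outgoing edge, a partition of the vertices into
those owned by player Dis (`disOwns v`) and those owned by player Con,
a priority function and an integer cost function on edges. -/
structure MPPGame (V : Type) where
  edge : V → V → Prop
  disOwns : V → Prop
  pri : V → ℕ
  cost : V → V → ℤ
  exists_succ : ∀ v, ∃ u, edge v u

/-- `A`, `B`, `C` partition `W`. -/
def Partition3 {V : Type} (W A B C : Set V) : Prop :=
  A ∪ B ∪ C = W ∧ Disjoint A B ∧ Disjoint A C ∧ Disjoint B C

/-- Lexicographic order on finite sequences, in which a proper prefix is
smaller than any of its proper extensions. -/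
def seqLt {M : Type} (lt : M → M → Prop) : List M → List M → Prop :=
  List.Lex lt

/-- The `p`-truncation of a sequence `⟨m_{d-1}, m_{d-3}, …, m_ℓ⟩` (indexed by
odd numbers from `d-1` downwards): keep only the components `m_i` with `i ≥ p`. -/
def trunc {M : Type} (d p : ℕ) (s : List M) : List M :=
  s.take ((d + 1 - p) / 2)

/-- The order on finite binary strings: `0s < ε`, `ε < 1s`, and
`bs < bs'` iff `s < s'`. -/
def binLt : List Bool → List Bool → Prop
  | [], [] => False
  | false :: _, [] => True
  | true :: _, [] => False
  | [], false :: _ => False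
  | [], true :: _ => True
  | a :: s, b :: t => (a = false ∧ b = true) ∨ (a = b ∧ binLt s t)

/-- Membership in `S_{n,d}`: sequences `⟨m_{d-1}, …, m_ℓ⟩` of binary strings
with `ℓ` odd, `1 ≤ ℓ ≤ d+1` (equivalently `2·len ≤ d`) and total length at
most `⌈log₂ n⌉`. -/
def inSnd (n d : ℕ) (s : List (List Bool)) : Prop :=
  2 * s.length ≤ d ∧ (s.map List.length).sum ≤ Nat.clog 2 n

namespace MPPGame

variable {V : Type}

/-- An infinite play: each consecutive pair is an edge. -/
def Play (G : MPPGame V) (p : ℕ → V) : Prop :=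
  ∀ i, G.edge (p i) (p (i + 1))

/-- An infinite play that stays in the subgame induced by `W`. -/
def PlayIn (G : MPPGame V) (W : Set V) (p : ℕ → V) : Prop :=
  (∀ i, p i ∈ W) ∧ ∀ i, G.edge (p i) (p (i + 1))

/-- The mean payoff of a play: the limit superior of the averages of the
partial sums of the edge costs. -/
noncomputable def meanPayoff (G : MPPGame V) (p : ℕ → V) : ℝ :=
  Filter.limsup
    (fun N => (∑ i ∈ Finset.range N, (G.cost (p i) (p (i + 1)) : ℝ)) / (N : ℝ))
    Filter.atTop

/-- Priority `k` occurs infinitely often along the play `p`. -/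
def InfOften (G : MPPGame V) (p : ℕ → V) (k : ℕ) : Prop :=
  ∀ N, ∃ i, N ≤ i ∧ G.pri (p i) = k

/-- A play is winning for Con if the highest priority occurring infinitely
often is odd and the mean payoff is negative. -/
def ConWinsPlay (G : MPPGame V) (p : ℕ → V) : Prop :=
  (∃ k, Odd k ∧ G.InfOften p k ∧ ∀ j, G.InfOften p j → j ≤ k) ∧
    G.meanPayoff p < 0

/-- A play is winning for Dis iff it is not winning for Con. -/
def DisWinsPlay (G : MPPGame V) (p : ℕ → V) : Prop :=
  ¬ G.ConWinsPlay p

/-- A (history-dependent) strategy for Dis: given the list of previously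
visited vertices and the current vertex (owned by Dis), it picks a successor
along an edge. -/
def DisStrategy (G : MPPGame V) (σ : List V → V → V) : Prop :=
  ∀ h v, G.disOwns v → G.edge v (σ h v)

/-- A (history-dependent) strategy for Con. -/
def ConStrategy (G : MPPGame V) (σ : List V → V → V) : Prop :=
  ∀ h v, ¬ G.disOwns v → G.edge v (σ h v)

/-- A play is consistent with a strategy `σ` of Dis. -/
def ConsistentDis (G : MPPGame V) (σ : List V → V → V) (p : ℕ → V) : Prop :=
  ∀ i, G.disOwns (p i) → p (i + 1) = σ ((List.range i).map p) (p i)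

/-- A play is consistent with a strategy `σ` of Con. -/
def ConsistentCon (G : MPPGame V) (σ : List V → V → V) (p : ℕ → V) : Prop :=
  ∀ i, ¬ G.disOwns (p i) → p (i + 1) = σ ((List.range i).map p) (p i)

/-- A positional strategy for Dis. -/
def PosDisStrategy (G : MPPGame V) (σ : V → V) : Prop :=
  ∀ v, G.disOwns v → G.edge v (σ v)

/-- A positional strategy for Con. -/
def PosConStrategy (G : MPPGame V) (σ : V → V) : Prop :=
  ∀ v, ¬ G.disOwns v → G.edge v (σ v)

/-- A play is consistent with a positional strategy `σ` of Dis. -/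
def ConsistentDisPos (G : MPPGame V) (σ : V → V) (p : ℕ → V) : Prop :=
  ∀ i, G.disOwns (p i) → p (i + 1) = σ (p i)

/-- A play is consistent with a positional strategy `σ` of Con. -/
def ConsistentConPos (G : MPPGame V) (σ : V → V) (p : ℕ → V) : Prop :=
  ∀ i, ¬ G.disOwns (p i) → p (i + 1) = σ (p i)

/-- The strategy `σ` of Dis is winning for Dis from `v`. -/
def DisWinsFrom (G : MPPGame V) (σ : List V → V → V) (v : V) : Prop :=
  ∀ p, G.Play p → p 0 = v → G.ConsistentDis σ p → G.DisWinsPlay p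

/-- The strategy `σ` of Con is winning for Con from `v`. -/
def ConWinsFrom (G : MPPGame V) (σ : List V → V → V) (v : V) : Prop :=
  ∀ p, G.Play p → p 0 = v → G.ConsistentCon σ p → G.ConWinsPlay p

/-- The positional strategy `σ` of Dis is winning for Dis from `v`. -/
def DisWinsFromPos (G : MPPGame V) (σ : V → V) (v : V) : Prop :=
  ∀ p, G.Play p → p 0 = v → G.ConsistentDisPos σ p → G.DisWinsPlay p

/-- The positional strategy `σ` of Con is winning for Con from `v`. -/
def ConWinsFromPos (G : MPPGame V) (σ : V → V) (v : V) : Prop :=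
  ∀ p, G.Play p → p 0 = v → G.ConsistentConPos σ p → G.ConWinsPlay p

/-- `W` is a trap for Con: every Con vertex of `W` has all its outgoing edges
into `W`, and every Dis vertex of `W` has at least one outgoing edge into `W`. -/
def TrapForCon (G : MPPGame V) (W : Set V) : Prop :=
  ∀ v ∈ W, (¬ G.disOwns v → ∀ u, G.edge v u → u ∈ W) ∧
    (G.disOwns v → ∃ u ∈ W, G.edge v u)

/-- `W` is a trap for Dis. -/
def TrapForDis (G : MPPGame V) (W : Set V) : Prop :=
  ∀ v ∈ W, (G.disOwns v → ∀ u, G.edge v u → u ∈ W) ∧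
    (¬ G.disOwns v → ∃ u ∈ W, G.edge v u)

/-- `R` is a trap for Con inside the subgame induced by `W` (only edges
within `W` count for Con). -/
def TrapForConIn (G : MPPGame V) (W R : Set V) : Prop :=
  ∀ v ∈ R, (¬ G.disOwns v → ∀ u ∈ W, G.edge v u → u ∈ R) ∧
    (G.disOwns v → ∃ u ∈ R, G.edge v u)

/-- `R` is a trap for Dis inside the subgame induced by `W`. -/
def TrapForDisIn (G : MPPGame V) (W R : Set V) : Prop :=
  ∀ v ∈ R, (G.disOwns v → ∀ u ∈ W, G.edge v u → u ∈ R) ∧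
    (¬ G.disOwns v → ∃ u ∈ R, G.edge v u)

/-- `W` induces a subgame: it is nonempty and every vertex of `W` has an
outgoing edge within `W`. -/
def IsSubgame (G : MPPGame V) (W : Set V) : Prop :=
  W.Nonempty ∧ ∀ v ∈ W, ∃ u ∈ W, G.edge v u

/-- `τ` is a positional reachability strategy for Dis from `T` to `B` in the
subgame `W`: it is a legal positional strategy within `W`, and every
consistent play in `W` starting in `T` reaches `B`. -/
def DisReach (G : MPPGame V) (W T B : Set V) (τ : V → V) : Prop :=
  (∀ v ∈ W, G.disOwns v → G.edge v (τ v) ∧ τ v ∈ W) ∧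
    ∀ p, G.PlayIn W p → p 0 ∈ T → G.ConsistentDisPos τ p → ∃ i, p i ∈ B

/-- `τ` is a positional reachability strategy for Con from `T` to `B` in `W`. -/
def ConReach (G : MPPGame V) (W T B : Set V) (τ : V → V) : Prop :=
  (∀ v ∈ W, ¬ G.disOwns v → G.edge v (τ v) ∧ τ v ∈ W) ∧
    ∀ p, G.PlayIn W p → p 0 ∈ T → G.ConsistentConPos τ p → ∃ i, p i ∈ B

/-- `σ` is a positional strategy for Dis that is mean-payoff winning for Dis on
`R`: every consistent play in `R` has limsup average cost `≥ 0`. -/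
def DisMPWin (G : MPPGame V) (R : Set V) (σ : V → V) : Prop :=
  (∀ v ∈ R, G.disOwns v → G.edge v (σ v) ∧ σ v ∈ R) ∧
    ∀ p, G.PlayIn R p → G.ConsistentDisPos σ p → 0 ≤ G.meanPayoff p

/-- `σ` is a positional strategy for Con that is mean-payoff winning for Con on
`R`: every consistent play in `R` has limsup average cost `< 0`. -/
def ConMPWin (G : MPPGame V) (R : Set V) (σ : V → V) : Prop :=
  (∀ v ∈ R, ¬ G.disOwns v → G.edge v (σ v) ∧ σ v ∈ R) ∧
    ∀ p, G.PlayIn R p → G.ConsistentConPos σ p → G.meanPayoff p < 0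

/-- `DisDecomp G b W` : the subgame `W`, whose highest priority is `b`, has a
`b`-decomposition for Dis.  (The disjunctions in the textbook definition are
split into separate constructors, and "`X` is empty or recursively has a
decomposition" is encoded as `X.Nonempty → DisDecomp G _ X`.) -/
inductive DisDecomp (G : MPPGame V) : ℕ → Set V → Prop where
  | even (b b' : ℕ) (W R T B : Set V) (τ : V → V)
      (hb : Even b) (hsub : G.IsSubgame W)
      (hpart : Partition3 W R T B)
      (hB : B = {v | v ∈ W ∧ G.pri v = b}) (hBne : B.Nonempty)
      (htop : ∀ v ∈ W, G.pri v ≤ b)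
      (hreach : G.DisReach W T B τ)
      (hb' : R.Nonempty → b' < b)
      (hR : R.Nonempty → DisDecomp G b' R) :
      DisDecomp G b W
  | oddRec (b b' b'' : ℕ) (W U T R : Set V) (τ : V → V)
      (hb : Odd b) (hsub : G.IsSubgame W)
      (hpart : Partition3 W U T R)
      (htop : ∀ v ∈ W, G.pri v ≤ b) (htop' : ∃ v ∈ W, G.pri v = b)
      (hRne : R.Nonempty) (htrap : G.TrapForConIn W R)
      (hb1 : b' < b) (hR : DisDecomp G b' R)
      (hreach : G.DisReach W T R τ)
      (hb2 : U.Nonempty → b'' ≤ b)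
      (hU : U.Nonempty → DisDecomp G b'' U) :
      DisDecomp G b W
  | oddMP (b b'' : ℕ) (W U T R : Set V) (τ σ : V → V)
      (hb : Odd b) (hsub : G.IsSubgame W)
      (hpart : Partition3 W U T R)
      (htop : ∀ v ∈ W, G.pri v ≤ b) (htop' : ∃ v ∈ W, G.pri v = b)
      (hRne : R.Nonempty) (htrap : G.TrapForConIn W R)
      (hsig : G.DisMPWin R σ)
      (hreach : G.DisReach W T R τ)
      (hb2 : U.Nonempty → b'' ≤ b)
      (hU : U.Nonempty → DisDecomp G b'' U) :
      DisDecomp G b W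

/-- `ConDecomp G b W` : the subgame `W`, whose highest priority is `b`, has a
`b`-decomposition for Con.  ("`X` is empty or recursively has a decomposition"
is encoded as `X.Nonempty → ConDecomp G _ X`.) -/
inductive ConDecomp (G : MPPGame V) : ℕ → Set V → Prop where
  | odd (b b' : ℕ) (W R T B : Set V) (τ lam : V → V)
      (hb : Odd b) (hsub : G.IsSubgame W)
      (hpart : Partition3 W R T B)
      (hB : B = {v | v ∈ W ∧ G.pri v = b}) (hBne : B.Nonempty)
      (htop : ∀ v ∈ W, G.pri v ≤ b)
      (hreach : G.ConReach W T B τ)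
      (hb' : R.Nonempty → b' < b)
      (hR : R.Nonempty → ConDecomp G b' R)
      (hlam : G.ConMPWin W lam) :
      ConDecomp G b W
  | even (b b' b'' : ℕ) (W U T R : Set V) (τ : V → V)
      (hb : Even b) (hsub : G.IsSubgame W)
      (hpart : Partition3 W U T R)
      (htop : ∀ v ∈ W, G.pri v ≤ b) (htop' : ∃ v ∈ W, G.pri v = b)
      (hRne : R.Nonempty) (htrap : G.TrapForDisIn W R)
      (hb1 : b' < b) (hR : ConDecomp G b' R)
      (hreach : G.ConReach W T R τ)
      (hb2 : U.Nonempty → b'' ≤ b)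
      (hU : U.Nonempty → ConDecomp G b'' U) :
      ConDecomp G b W

/-- The maximum absolute value of the cost of an edge of the subgame induced
by `W` (and `0` if there is none). -/
noncomputable def maxCostOn (G : MPPGame V) (W : Set V) : ℕ :=
  sSup {n : ℕ | ∃ v ∈ W, ∃ u ∈ W, G.edge v u ∧ n = (G.cost v u).natAbs}

/-- The edge `(v, u)` is progressive in the progress labelling `(μ, φ)`
(with priorities bounded by the even number `d`, over an ordered set with
strict order `lt`). -/
def Progressive {M : Type} (G : MPPGame V) (d : ℕ) (lt : M → M → Prop)
    (μ : V → List M) (φ : V → WithTop ℤ) (v u : V) : Prop :=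
  seqLt lt (trunc d (G.pri v) (μ u)) (μ v) ∨
  (trunc d (G.pri v) (μ u) = μ v ∧ Even (G.pri v) ∧ φ v = ⊤) ∨
  (μ u = μ v ∧ φ v ≠ ⊤ ∧ φ u ≤ φ v + (G.cost v u : WithTop ℤ))

/-- `(μ, φ)` is a progress labelling on the subgame induced by `W`:
`μ v` represents the sequence `⟨m_{d-1}, m_{d-3}, …, m_ℓ⟩` (so that
`d + 1 = 2·(μ v).length + ℓ` with `ℓ` odd and `ℓ ≥ π(v)`);
if `φ v = ∞` then `ℓ` is the least odd integer `≥ π(v)`; and if `φ v ≠ ∞`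
then `0 ≤ φ v ≤ n·C`, where `n` is the number of vertices of the subgame and
`C` the maximum absolute value of an edge cost of the subgame. -/
def IsProgressLabellingOn {M : Type} (G : MPPGame V) (W : Set V) (d : ℕ)
    (μ : V → List M) (φ : V → WithTop ℤ) : Prop :=
  ∀ v ∈ W,
    (∃ l, Odd l ∧ G.pri v ≤ l ∧ d + 1 = 2 * (μ v).length + l) ∧
    (φ v = ⊤ → d + 1 ≤ 2 * (μ v).length + G.pri v + 1) ∧
    (φ v ≠ ⊤ → 0 ≤ φ v ∧
      φ v ≤ (((W.ncard * G.maxCostOn W : ℕ) : ℤ) : WithTop ℤ))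

/-- `(μ, φ)` is a progress measure on the subgame induced by `W`: a progress
labelling such that every Dis vertex has a progressive outgoing edge in the
subgame, and every outgoing edge of a Con vertex in the subgame is progressive. -/
def IsProgressMeasureOn {M : Type} (G : MPPGame V) (W : Set V) (d : ℕ)
    (lt : M → M → Prop) (μ : V → List M) (φ : V → WithTop ℤ) : Prop :=
  G.IsProgressLabellingOn W d μ φ ∧
  (∀ v ∈ W, G.disOwns v → ∃ u ∈ W, G.edge v u ∧ G.Progressive d lt μ φ v u) ∧
  (∀ v ∈ W, ¬ G.disOwns v → ∀ u ∈ W, G.edge v u → G.Progressive d lt μ φ v u)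

end MPPGame

lemma binLt_asymm : ∀ s t : List Bool, binLt s t → ¬ binLt t s := by
  intro s
  induction s with
  | nil =>
    intro t h h'
    cases t with
    | nil => simp [binLt] at h
    | cons b t => cases b <;> simp [binLt] at h h'
  | cons a s ih =>
    intro t h h'
    cases t with
    | nil => cases a <;> simp [binLt] at h h'
    | cons b t =>
      cases a <;> cases b <;> simp [binLt] at h h' <;> exact ih t h h'

lemma lex_asymm {α : Type} {r : α → α → Prop} (hr : ∀ a b, r a b → ¬ r b a) :
    ∀ x y : List α, List.Lex r x y → ¬ List.Lex r y x := by
  intro x y h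
  induction h with
  | nil => intro h'; nomatch h'
  | @rel a l₁ b l₂ hab =>
    intro h'
    cases h' with
    | rel hba => exact hr _ _ hab hba
    | cons h'' => exact hr _ _ hab hab
  | @cons a l₁ l₂ h ih =>
    intro h'
    cases h' with
    | rel haa => exact hr _ _ haa haa
    | cons h'' => exact ih h''

lemma clog_half {s n : ℕ} (hs : 1 ≤ s) (h : 2 * s ≤ n) :
    Nat.clog 2 s + 1 ≤ Nat.clog 2 n := by
  have hn2 : 2 ≤ n := by omega
  have h1 : 0 < Nat.clog 2 n := Nat.clog_pos (by norm_num) hn2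
  have h2 : n ≤ 2 ^ Nat.clog 2 n := Nat.le_pow_clog (by norm_num) n
  have h3 : s ≤ 2 ^ (Nat.clog 2 n - 1) := by
    have he : 2 ^ Nat.clog 2 n = 2 * 2 ^ (Nat.clog 2 n - 1) := by
      rw [← pow_succ']
      congr 1
      omega
    omega
  have h4 := Nat.clog_mono_right 2 h3
  rw [Nat.clog_pow 2 _ (by norm_num)] at h4
  omega

lemma split_exists {M : Type} (wt : M → ℕ) :
    ∀ (l : List M) (t : ℕ), 1 ≤ t → t ≤ (l.map wt).sum →
    ∃ L x R, l = L ++ x :: R ∧ (L.map wt).sum < t ∧ t ≤ (L.map wt).sum + wt x := by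
  intro l
  induction l with
  | nil => intro t h1 h2; simp at h2; omega
  | cons a l ih =>
    intro t h1 h2
    by_cases h : t ≤ wt a
    · exact ⟨[], a, l, rfl, by simp; omega, by simpa using h⟩
    · simp only [List.map_cons, List.sum_cons] at h2
      obtain ⟨L, x, R, hsplit, hlt', hle'⟩ := ih (t - wt a) (by omega) (by omega)
      refine ⟨a :: L, x, R, by rw [hsplit]; rfl, ?_, ?_⟩ <;>
        simp only [List.map_cons, List.sum_cons] <;> omega

lemma codes_exist {M : Type} (lt : M → M → Prop) [hlt : IsStrictTotalOrder M lt] :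
    ∀ (m : ℕ) (l : List M), l.length < m → l.Pairwise lt → ∀ wt : M → ℕ, (∀ a ∈ l, 1 ≤ wt a) →
    ∃ code : M → List Bool,
      (∀ a ∈ l, ∀ b ∈ l, lt a b → binLt (code a) (code b)) ∧
      (∀ a ∈ l, (code a).length + Nat.clog 2 (wt a) ≤ Nat.clog 2 ((l.map wt).sum)) := by
  intro m
  induction m with
  | zero => intro l h; omega
  | succ m ih =>
    intro l hlen hpair wt hwt
    classical
    have hasym : ∀ u v : M, lt u v → lt v u → False :=
      fun u v h1 h2 => irrefl_of lt u (trans_of lt h1 h2)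
    match l, hlen, hpair, hwt with
    | [], _, _, _ => exact ⟨fun _ => [], by simp, by simp⟩
    | [a], _, _, hwt =>
      refine ⟨fun _ => [], ?_, ?_⟩
      · intro u hu v hv huv
        simp only [List.mem_singleton] at hu hv
        subst hu; subst hv
        exact absurd huv (irrefl_of lt _)
      · intro u hu
        simp only [List.mem_singleton] at hu
        subst hu
        simp
    | a0 :: b0 :: l0, hlen, hpair, hwt =>
      set l : List M := a0 :: b0 :: l0 with hl
      set n : ℕ := (l.map wt).sum with hn
      have hn2 : 2 ≤ n := by
        have h1 : 1 ≤ wt a0 := hwt a0 (by simp [hl])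
        have h2 : 1 ≤ wt b0 := hwt b0 (by simp [hl])
        simp only [hn, hl, List.map_cons, List.sum_cons]
        omega
      obtain ⟨L, x, R, hsplit, hltL, hleL⟩ :=
        split_exists wt l ((n + 1) / 2) (by omega) (by rw [← hn]; omega)
      have hsums : n = (L.map wt).sum + wt x + (R.map wt).sum := by
        rw [hn, hsplit]
        simp [List.sum_append]
        omega
      -- pairwise decomposition
      rw [hsplit] at hpair
      rw [List.pairwise_append] at hpair
      obtain ⟨hpL, hpxR, hcross⟩ := hpair
      rw [List.pairwise_cons] at hpxR
      obtain ⟨hxR, hpR⟩ := hpxR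
      have hxnL : x ∉ L := fun h => irrefl_of lt x (hcross x h x (by simp))
      have hxnR : x ∉ R := fun h => irrefl_of lt x (hxR x h)
      have hLR : ∀ c, c ∈ L → c ∈ R → False :=
        fun c h1 h2 => irrefl_of lt c (hcross c h1 c (by simp [h2]))
      have hlenl : l.length = L.length + R.length + 1 := by
        rw [hsplit]; simp; omega
      have hmemL : ∀ c ∈ L, c ∈ l := fun c h => by
        rw [hsplit]; exact List.mem_append_left _ h
      have hmemR : ∀ c ∈ R, c ∈ l := fun c h => by
        rw [hsplit]; exact List.mem_append_right _ (by simp [h])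
      obtain ⟨codeL, hLord, hLlen⟩ := ih L (by omega) hpL wt (fun c hc => hwt c (hmemL c hc))
      obtain ⟨codeR, hRord, hRlen⟩ := ih R (by omega) hpR wt (fun c hc => hwt c (hmemR c hc))
      refine ⟨fun c => if c ∈ L then false :: codeL c else if c ∈ R then true :: codeR c else [],
        ?_, ?_⟩
      · intro u hu v hv huv
        beta_reduce
        rw [hsplit, List.mem_append, List.mem_cons] at hu hv
        rcases hu with hu | hu | hu <;> rcases hv with hv | hv | hv
        · rw [if_pos hu, if_pos hv]
          simp [binLt, hLord u hu v hv huv]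
        · subst hv
          rw [if_pos hu, if_neg hxnL, if_neg hxnR]
          simp [binLt]
        · rw [if_pos hu, if_neg (fun h => hLR v h hv), if_pos hv]
          simp [binLt]
        · subst hu
          exact absurd huv (fun h => hasym _ _ h (hcross v hv u (by simp)))
        · subst hu; subst hv
          exact absurd huv (irrefl_of lt v)
        · subst hu
          rw [if_neg hxnL, if_neg hxnR, if_neg (fun h => hLR v h hv), if_pos hv]
          simp [binLt]
        · exact absurd huv (fun h => hasym _ _ h (hcross v hv u (by simp [hu])))
        · subst hv
          exact absurd huv (fun h => hasym _ _ h (hxR u hu))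
        · rw [if_neg (fun h => hLR u h hu), if_pos hu,
            if_neg (fun h => hLR v h hv), if_pos hv]
          simp [binLt, hRord u hu v hv huv]
      · intro u hu
        beta_reduce
        rw [hsplit, List.mem_append, List.mem_cons] at hu
        have hkey : ∀ (S : List M), (∀ c, c ∈ S → c ∈ l) → 2 * (S.map wt).sum ≤ n →
            ∀ c ∈ S, ∀ cl : List Bool,
            cl.length + Nat.clog 2 (wt c) ≤ Nat.clog 2 ((S.map wt).sum) →
            (false :: cl).length + Nat.clog 2 (wt c) ≤ Nat.clog 2 n ∧
            (true :: cl).length + Nat.clog 2 (wt c) ≤ Nat.clog 2 n := by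
          intro S hS h2S c hc cl hcl
          have h1 : 1 ≤ wt c := hwt c (hS c hc)
          have h1S : 1 ≤ (S.map wt).sum := by
            have := List.single_le_sum (l := S.map wt) (by intro x hx; omega) (wt c)
              (List.mem_map_of_mem (f := wt) hc)
            omega
          have := clog_half h1S h2S
          constructor <;> simp only [List.length_cons] <;> omega
        rcases hu with hu | hu | hu
        · rw [if_pos hu]
          have h2L : 2 * (L.map wt).sum ≤ n := by omega
          exact ((hkey L hmemL h2L u hu (codeL u) (hLlen u hu))).1
        · subst hu
          rw [if_neg hxnL, if_neg hxnR]
          simp only [List.length_nil, Nat.zero_add]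
          exact Nat.clog_mono_right 2 (by omega)
        · rw [if_neg (fun h => hLR u h hu), if_pos hu]
          have h2R : 2 * (R.map wt).sum ≤ n := by omega
          exact ((hkey R hmemR h2R u hu (codeR u) (hRlen u hu))).2
lemma msum_le_msum {s t : Multiset ℕ} (h : s ≤ t) : s.sum ≤ t.sum := by
  obtain ⟨u, rfl⟩ := Multiset.le_iff_exists_add.1 h
  simp

lemma sum_card_filter_le {α β : Type} (p : β → α → Prop) [∀ b a, Decidable (p b a)]
    (hdisj : ∀ b b' a, b ≠ b' → p b a → p b' a → False) :
    ∀ (l : List β), l.Nodup → ∀ (T : Multiset α),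
      (l.map fun b => Multiset.card (T.filter (p b))).sum ≤ Multiset.card T := by
  intro l
  induction l with
  | nil => intro _ T; simp
  | cons b l ih =>
    intro hnd T
    simp only [List.map_cons, List.sum_cons]
    rw [List.nodup_cons] at hnd
    obtain ⟨hbl, hnd⟩ := hnd
    have hcard : Multiset.card (T.filter (p b)) +
        Multiset.card (T.filter (fun a => ¬ p b a)) = Multiset.card T := by
      rw [← Multiset.card_add, Multiset.filter_add_not]
    have hmaps : (l.map fun b' => Multiset.card (T.filter (p b'))) =
        l.map fun b' => Multiset.card ((T.filter (fun a => ¬ p b a)).filter (p b')) := by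
      apply List.map_congr_left
      intro b' hb'
      congr 1
      rw [Multiset.filter_filter]
      apply Multiset.filter_congr
      intro x _
      constructor
      · intro hx
        exact ⟨hx, fun hbx => hdisj b b' x (fun he => hbl (he ▸ hb')) hbx hx⟩
      · exact fun hx => hx.1
    rw [hmaps]
    have := ih hnd (T.filter (fun a => ¬ p b a))
    omega

def encAux {M : Type} (code : M → List Bool) (g : M → List M → List (List Bool)) :
    List M → List (List Bool)
  | [] => []
  | a :: s' => code a :: g a s'

lemma encode_exists {M : Type} (lt : M → M → Prop) [hlt : IsStrictTotalOrder M lt] :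
    ∀ (N : ℕ) (T : Multiset (List M)), (T.map List.length).sum < N →
    ∃ f : List M → List (List Bool),
      (∀ s ∈ T, (f s).length = s.length) ∧
      (∀ s ∈ T, ((f s).map List.length).sum ≤ Nat.clog 2 (Multiset.card T)) ∧
      (∀ s ∈ T, ∀ t ∈ T, ∀ k,
        (List.Lex lt (s.take k) (t.take k) → List.Lex binLt ((f s).take k) ((f t).take k)) ∧
        (s.take k = t.take k → (f s).take k = (f t).take k)) := by
  intro N
  induction N with
  | zero => intro T h; omega
  | succ N ih =>
    intro T hT
    classical
    set Ta : M → Multiset (List M) :=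
      fun a => (T.filter (fun s => s.head? = some a)).map List.tail with hTadef
    have hmem_Ta : ∀ (a : M) (s' : List M), s' ∈ Ta a ↔ a :: s' ∈ T := by
      intro a s'
      constructor
      · intro h
        obtain ⟨s, hs, rfl⟩ := Multiset.mem_map.1 h
        obtain ⟨hsT, hh⟩ := Multiset.mem_filter.1 hs
        cases s with
        | nil => simp at hh
        | cons c s =>
          simp only [List.head?_cons, Option.some.injEq] at hh
          subst hh
          exact hsT
      · intro h
        have : a :: s' ∈ T.filter (fun s => s.head? = some a) :=
          Multiset.mem_filter.2 ⟨h, by simp⟩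
        exact Multiset.mem_map.2 ⟨a :: s', this, rfl⟩
    -- measure decrease
    have hmeasure : ∀ a : M, (∃ s', a :: s' ∈ T) → ((Ta a).map List.length).sum < N := by
      intro a ⟨s0, hs0⟩
      have hfle : T.filter (fun s => s.head? = some a) ≤ T := Multiset.filter_le _ _
      have h1 : ((Ta a).map List.length).sum + Multiset.card (Ta a) =
          ((T.filter (fun s => s.head? = some a)).map List.length).sum := by
        rw [hTadef]
        simp only [Multiset.map_map, Multiset.card_map]
        have hcongr : (T.filter (fun s => s.head? = some a)).map (List.length ∘ List.tail) =
            (T.filter (fun s => s.head? = some a)).map (fun s => s.tail.length) := rfl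
        rw [hcongr]
        have h2 : ((T.filter (fun s => s.head? = some a)).map (fun s => s.length)) =
            ((T.filter (fun s => s.head? = some a)).map (fun s => s.tail.length + 1)) := by
          apply Multiset.map_congr rfl
          intro x hx
          obtain ⟨-, hh⟩ := Multiset.mem_filter.1 hx
          cases x with
          | nil => simp at hh
          | cons c s => simp
        rw [h2, Multiset.sum_map_add]
        simp
      have h3 : ((T.filter (fun s => s.head? = some a)).map List.length).sum ≤
          (T.map List.length).sum := msum_le_msum (Multiset.map_le_map hfle)
      have h4 : 0 < Multiset.card (Ta a) :=
        Multiset.card_pos_iff_exists_mem.2 ⟨s0, (hmem_Ta a s0).2 hs0⟩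
      omega
    -- the sorted list of heads
    set le : M → M → Prop := fun a b => lt a b ∨ a = b with hledef
    have hasym : ∀ u v : M, lt u v → lt v u → False :=
      fun u v h1 h2 => irrefl_of lt u (trans_of lt h1 h2)
    haveI : IsTrans M le := ⟨by
      rintro a b c (h1 | rfl) (h2 | rfl)
      · exact Or.inl (trans_of lt h1 h2)
      · exact Or.inl h1
      · exact Or.inl h2
      · exact Or.inr rfl⟩
    haveI : IsAntisymm M le := ⟨by
      rintro a b (h1 | h1) (h2 | h2)
      · exact absurd h2 (fun h => hasym _ _ h1 h)
      · exact h2.symm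
      · exact h1
      · exact h1⟩
    haveI : IsTotal M le := ⟨by
      intro a b
      rcases trichotomous_of lt a b with h | rfl | h
      · exact Or.inl (Or.inl h)
      · exact Or.inl (Or.inr rfl)
      · exact Or.inr (Or.inl h)⟩
    set l : List M := Multiset.sort (Multiset.filterMap List.head? T).dedup le with hldef
    have hmeml : ∀ a : M, a ∈ l ↔ ∃ s ∈ T, s.head? = some a := by
      intro a
      rw [hldef, Multiset.mem_sort, Multiset.mem_dedup, Multiset.mem_filterMap]
    have hnodupl : l.Nodup := by
      have h1 : Multiset.Nodup (l : Multiset M) := by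
        rw [hldef, Multiset.sort_eq]
        exact Multiset.nodup_dedup _
      exact Multiset.coe_nodup.1 h1
    have hsortl : l.Pairwise le := Multiset.pairwise_sort _ le
    have hpairl : l.Pairwise lt := by
      have h2 : l.Pairwise (fun a b => le a b ∧ a ≠ b) := List.Pairwise.and hsortl hnodupl
      exact h2.imp (fun h => h.1.resolve_right h.2)
    set wt : M → ℕ := fun a => Multiset.card (Ta a) with hwtdef
    have hwt1 : ∀ a ∈ l, 1 ≤ wt a := by
      intro a ha
      obtain ⟨s, hs, hh⟩ := (hmeml a).1 ha
      cases s with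
      | nil => simp at hh
      | cons c s =>
        simp only [List.head?_cons, Option.some.injEq] at hh
        have h5 : s ∈ Ta a := (hmem_Ta a s).2 (hh ▸ hs)
        have h6 := Multiset.card_pos_iff_exists_mem.2 ⟨s, h5⟩
        exact h6
    have hsumwt : (l.map wt).sum ≤ Multiset.card T := by
      have heq : l.map wt = l.map fun a => Multiset.card (T.filter (fun s => s.head? = some a)) := by
        apply List.map_congr_left
        intro a _
        rw [hwtdef, hTadef]
        simp [Multiset.card_map]
      rw [heq]
      exact sum_card_filter_le (fun a s => s.head? = some a)
        (fun b b' x hne h1 h2 => by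
          have h1' : x.head? = some b := h1
          have h2' : x.head? = some b' := h2
          exact hne (Option.some.inj (h1'.symm.trans h2'))) l hnodupl T
    obtain ⟨code, hcord, hclen⟩ :=
      codes_exist lt (l.length + 1) l (Nat.lt_succ_self _) hpairl wt hwt1
    have hclen' : ∀ a ∈ l, (code a).length + Nat.clog 2 (wt a) ≤ Nat.clog 2 (Multiset.card T) :=
      fun a ha => le_trans (hclen a ha) (Nat.clog_mono_right 2 hsumwt)
    -- recursive encodings per head
    have hex : ∀ a : M, ∃ fa : List M → List (List Bool), (∃ t, a :: t ∈ T) →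
        ((∀ s ∈ Ta a, (fa s).length = s.length) ∧
         (∀ s ∈ Ta a, ((fa s).map List.length).sum ≤ Nat.clog 2 (Multiset.card (Ta a))) ∧
         (∀ s ∈ Ta a, ∀ t ∈ Ta a, ∀ k,
           (List.Lex lt (s.take k) (t.take k) →
             List.Lex binLt ((fa s).take k) ((fa t).take k)) ∧
           (s.take k = t.take k → (fa s).take k = (fa t).take k))) := by
      intro a
      by_cases h : ∃ t, a :: t ∈ T
      · obtain ⟨fa, h1, h2, h3⟩ := ih (Ta a) (hmeasure a h)
        exact ⟨fa, fun _ => ⟨h1, h2, h3⟩⟩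
      · exact ⟨fun _ => [], fun h' => absurd h' h⟩
    choose g hg using hex
    refine ⟨encAux code g, ?_, ?_, ?_⟩
    · intro s hs
      cases s with
      | nil => simp [encAux]
      | cons a s' =>
        have ha : ∃ t, a :: t ∈ T := ⟨s', hs⟩
        have hspec := hg a ha
        simp only [encAux, List.length_cons]
        rw [hspec.1 s' ((hmem_Ta a s').2 hs)]
    · intro s hs
      cases s with
      | nil => simp [encAux]
      | cons a s' =>
        have ha : ∃ t, a :: t ∈ T := ⟨s', hs⟩
        have hspec := hg a ha
        have hal : a ∈ l := (hmeml a).2 ⟨a :: s', hs, by simp⟩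
        have h1 := hspec.2.1 s' ((hmem_Ta a s').2 hs)
        have h2 := hclen' a hal
        simp only [encAux, List.map_cons, List.sum_cons]
        simp only [hwtdef] at h2
        omega
    · intro s hs t ht k
      cases k with
      | zero => simp
      | succ k =>
        cases s with
        | nil =>
          cases t with
          | nil =>
            refine ⟨fun h => ?_, fun _ => rfl⟩
            rw [List.take_nil] at h
            nomatch h
          | cons b t' =>
            refine ⟨fun _ => ?_, fun h => ?_⟩
            · simp only [encAux, List.take_nil, List.take_succ_cons]
              exact List.Lex.nil
            · rw [List.take_nil, List.take_succ_cons] at h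
              simp at h
        | cons a s' =>
          cases t with
          | nil =>
            refine ⟨fun h => ?_, fun h => ?_⟩
            · rw [List.take_nil, List.take_succ_cons] at h
              nomatch h
            · rw [List.take_nil, List.take_succ_cons] at h
              simp at h
          | cons b t' =>
            have ha : ∃ u, a :: u ∈ T := ⟨s', hs⟩
            have hb : ∃ u, b :: u ∈ T := ⟨t', ht⟩
            have hal : a ∈ l := (hmeml a).2 ⟨a :: s', hs, by simp⟩
            have hbl : b ∈ l := (hmeml b).2 ⟨b :: t', ht, by simp⟩
            have hs' : s' ∈ Ta a := (hmem_Ta a s').2 hs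
            have ht' : t' ∈ Ta b := (hmem_Ta b t').2 ht
            simp only [List.take_succ_cons, encAux]
            constructor
            · intro h
              cases h with
              | rel hab => exact List.Lex.rel (hcord a hal b hbl hab)
              | cons h'' =>
                exact List.Lex.cons (((hg a ha).2.2 s' hs' t' (by exact ht') k).1 h'')
            · intro h
              rw [List.cons.injEq] at h
              obtain ⟨rfl, h2⟩ := h
              rw [List.cons.injEq]
              exact ⟨rfl, ((hg a ha).2.2 s' hs' t' (by exact ht') k).2 h2⟩

/-- Every progress labelling (over any linearly ordered set
`M`) has an isomorphic succinct progress labelling: same `φ`, values of `μ'`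
in `S_{n,d}`, same index `ℓ` at every vertex, and the same order and equality
relations between all `p`-truncations; in particular if `(μ, φ)` is a progress
measure then so is `(μ', φ)`. -/
theorem exists_succinct_isomorphic_progress_labelling
    {V M : Type} [Fintype V] (G : MPPGame V)
    (d : ℕ) (hd : Even d) (hpri : ∀ v, G.pri v ≤ d)
    (lt : M → M → Prop) (hlt : IsStrictTotalOrder M lt)
    (μ : V → List M) (φ : V → WithTop ℤ)
    (hlab : G.IsProgressLabellingOn Set.univ d μ φ) :
    ∃ μ' : V → List (List Bool),
      G.IsProgressLabellingOn Set.univ d μ' φ ∧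
      (∀ v, inSnd (Fintype.card V) d (μ' v)) ∧
      (∀ v, (μ' v).length = (μ v).length) ∧
      (∀ v w p, seqLt binLt (trunc d p (μ' v)) (trunc d p (μ' w)) ↔
        seqLt lt (trunc d p (μ v)) (trunc d p (μ w))) ∧
      (∀ v w p, trunc d p (μ' v) = trunc d p (μ' w) ↔
        trunc d p (μ v) = trunc d p (μ w)) ∧
      (G.IsProgressMeasureOn Set.univ d lt μ φ →
        G.IsProgressMeasureOn Set.univ d binLt μ' φ) 
    := by
  classical
  haveI := hlt
  set T : Multiset (List M) := Finset.univ.val.map μ with hTdef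
  have hmemT : ∀ v : V, μ v ∈ T :=
    fun v => Multiset.mem_map_of_mem μ (Finset.mem_univ v)
  obtain ⟨f, hflen, hfsize, hford⟩ :=
    encode_exists lt ((T.map List.length).sum + 1) T (Nat.lt_succ_self _)
  have hlen' : ∀ v, (f (μ v)).length = (μ v).length := fun v => hflen _ (hmemT v)
  have basym := lex_asymm binLt_asymm
  have key : ∀ v w : V, ∀ k : ℕ,
      (List.Lex binLt ((f (μ v)).take k) ((f (μ w)).take k) ↔
        List.Lex lt ((μ v).take k) ((μ w).take k)) ∧
      (((f (μ v)).take k = (f (μ w)).take k) ↔ ((μ v).take k = (μ w).take k)) := by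
    intro v w k
    have h1 := hford _ (hmemT v) _ (hmemT w) k
    have h2 := hford _ (hmemT w) _ (hmemT v) k
    have tri := trichotomous_of (List.Lex lt) ((μ v).take k) ((μ w).take k)
    constructor
    · constructor
      · intro h
        rcases tri with h' | h' | h'
        · exact h'
        · exact absurd h (by rw [h1.2 h']; exact fun hh => basym _ _ hh hh)
        · exact absurd (h2.1 h') (basym _ _ h)
      · exact h1.1
    · constructor
      · intro h
        rcases tri with h' | h' | h'
        · exact absurd (h1.1 h') (by rw [h]; exact fun hh => basym _ _ hh hh)
        · exact h'
        · exact absurd (h2.1 h') (by rw [h]; exact fun hh => basym _ _ hh hh)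
      · exact h1.2
  have hlabel : ∀ v : V, ∃ lv, Odd lv ∧ G.pri v ≤ lv ∧ d + 1 = 2 * (μ v).length + lv :=
    fun v => ((hlab v (Set.mem_univ v)).1)
  have h2d : ∀ v : V, 2 * (μ v).length ≤ d := by
    intro v
    obtain ⟨lv, ⟨c, hc⟩, _, he⟩ := hlabel v
    omega
  have hcardT : Multiset.card T = Fintype.card V := by
    rw [hTdef, Multiset.card_map]
    rfl
  have hlab' : G.IsProgressLabellingOn Set.univ d (fun v => f (μ v)) φ := by
    intro v hv
    obtain ⟨⟨lv, ha1, ha2, ha3⟩, h4, h5⟩ := hlab v hv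
    exact ⟨⟨lv, ha1, ha2, by rw [hlen' v]; exact ha3⟩, fun h => by rw [hlen' v]; exact h4 h, h5⟩
  refine ⟨fun v => f (μ v), hlab', ?_, fun v => hlen' v, ?_, ?_, ?_⟩
  · intro v
    refine ⟨by rw [hlen' v]; exact h2d v, ?_⟩
    have := hfsize (μ v) (hmemT v)
    rw [hcardT] at this
    exact this
  · intro v w p
    exact (key v w ((d + 1 - p) / 2)).1
  · intro v w p
    exact (key v w ((d + 1 - p) / 2)).2
  · rintro ⟨hl, hdis, hcon⟩
    have hprog : ∀ v u : V, G.Progressive d lt μ φ v u →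
        G.Progressive d binLt (fun x => f (μ x)) φ v u := by
      intro v u h
      have hlenv : (μ v).length ≤ (d + 1 - G.pri v) / 2 := by
        obtain ⟨lv, ⟨c, hc⟩, hp, he⟩ := hlabel v
        omega
      have hfullv : (μ v).take ((d + 1 - G.pri v) / 2) = μ v := List.take_of_length_le hlenv
      have hfullv' : (f (μ v)).take ((d + 1 - G.pri v) / 2) = f (μ v) :=
        List.take_of_length_le (by rw [hlen' v]; exact hlenv)
      rcases h with h | ⟨h1, h2, h3⟩ | ⟨h1, h2, h3⟩
      · left
        show List.Lex binLt ((f (μ u)).take ((d + 1 - G.pri v) / 2)) (f (μ v))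
        rw [← hfullv']
        refine (key u v _).1.2 ?_
        rw [hfullv]
        exact h
      · refine Or.inr (Or.inl ⟨?_, h2, h3⟩)
        show (f (μ u)).take ((d + 1 - G.pri v) / 2) = f (μ v)
        rw [← hfullv']
        refine (key u v _).2.2 ?_
        rw [hfullv]
        exact h1
      · exact Or.inr (Or.inr ⟨congrArg (fun s => f s) h1, h2, h3⟩)
    refine ⟨hlab', ?_, ?_⟩
    · intro v hv hov
      obtain ⟨u, hu, he, hp⟩ := hdis v hv hov
      exact ⟨u, hu, he, hprog v u hp⟩
    · intro v hv hov u hu he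
      exact hprog v u (hcon v hv hov u hu he)
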